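/- Define the pairing [·,·] on pairs of homogeneous polynomials of degree n₁ in X,Y over a field K of characteristic 0 by [X^i Y^{n₁−i}, X^j Y^{n₁−j}] = (−1)^i / binom(n₁,i) if i+j = n₁ and 0 otherwise, extended bilinearly. Then for every g ∈ GL_2(K) and homogeneous polynomials P, Q of degree n₁, one has [P((X,Y)g), Q((X,Y)g)] = (det g)^{n₁} · [P, Q]. -/

import Mathlib

open MvPolynomial

/-- The pairing on binary forms of degree `n` determined by
`[X^i Y^{n−i}, X^j Y^{n−j}] = (−1)^i / C(n,i)` if `i + j = n` and `0` otherwise. -/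
noncomputable def pairPoly (K : Type*) [Field K] (n : ℕ)
    (P Q : MvPolynomial (Fin 2) K) : K :=
  ∑ i ∈ Finset.range (n + 1),
    ((-1 : K) ^ i / (n.choose i : K)) *
      coeff (Finsupp.single (0 : Fin 2) i + Finsupp.single (1 : Fin 2) (n - i)) P *
      coeff (Finsupp.single (0 : Fin 2) (n - i) + Finsupp.single (1 : Fin 2) i) Q

section Aux

set_option linter.unusedSectionVars false

variable {K : Type*} [Field K]

lemma finsupp_fin2_eq (m : Fin 2 →₀ ℕ) :
    m = Finsupp.single 0 (m 0) + Finsupp.single 1 (m 1) := by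
  ext j
  fin_cases j <;> simp

lemma single_add_single_eq {a b c d : ℕ} :
    (Finsupp.single (0 : Fin 2) a + Finsupp.single 1 b =
      Finsupp.single (0 : Fin 2) c + Finsupp.single 1 d) ↔ a = c ∧ b = d := by
  constructor
  · intro h
    constructor
    · have := DFunLike.congr_fun h 0; simpa using this
    · have := DFunLike.congr_fun h 1; simpa using this
  · rintro ⟨rfl, rfl⟩; rfl

/-- abbreviation for our monomials -/
noncomputable def mon (a b : ℕ) (x : K) : MvPolynomial (Fin 2) K :=
  monomial (Finsupp.single (0 : Fin 2) a + Finsupp.single 1 b) x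

lemma coeff_mon (a b c d : ℕ) (x : K) :
    coeff (Finsupp.single (0 : Fin 2) a + Finsupp.single 1 b) (mon c d x) =
      if c = a ∧ d = b then x else 0 := by
  rw [mon, coeff_monomial]
  simp only [single_add_single_eq]

lemma pairPoly_mon (n a b c d : ℕ) (x y : K) :
    pairPoly K n (mon a b x) (mon c d y) =
      if b = n - a ∧ c = n - a ∧ d = a ∧ a ≤ n then ((-1 : K) ^ a / (n.choose a : K)) * x * y
      else 0 := by
  have hfa : ∀ i : ℕ, ((-1 : K) ^ i / (n.choose i : K)) *
      coeff (Finsupp.single (0 : Fin 2) i + Finsupp.single (1 : Fin 2) (n - i)) (mon a b x) *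
      coeff (Finsupp.single (0 : Fin 2) (n - i) + Finsupp.single (1 : Fin 2) i) (mon c d y) =
      if i = a then (if b = n - a ∧ c = n - a ∧ d = a then
        ((-1 : K) ^ a / (n.choose a : K)) * x * y else 0) else 0 := by
    intro i
    rw [coeff_mon, coeff_mon]
    by_cases hia : i = a
    · subst hia
      rw [if_pos rfl]
      by_cases h : b = n - i ∧ c = n - i ∧ d = i
      · rw [if_pos ⟨rfl, h.1⟩, if_pos ⟨h.2.1, h.2.2⟩, if_pos h]
      · rw [if_neg h]
        by_cases hb : b = n - i
        · have h2 : ¬ (c = n - i ∧ d = i) := fun h2 => h ⟨hb, h2⟩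
          rw [if_neg h2, mul_zero]
        · rw [if_neg (fun h2 => hb h2.2), mul_zero, zero_mul]
    · rw [if_neg hia]
      rw [if_neg (fun h2 => hia (by omega))]
      simp
  rw [pairPoly]
  simp only [hfa]
  rw [Finset.sum_ite_eq' (Finset.range (n+1)) a]
  by_cases ha : a ≤ n
  · rw [if_pos (Finset.mem_range.mpr (by omega))]
    by_cases h : b = n - a ∧ c = n - a ∧ d = a
    · rw [if_pos h, if_pos ⟨h.1, h.2.1, h.2.2, ha⟩]
    · rw [if_neg h, if_neg (fun h2 => h ⟨h2.1, h2.2.1, h2.2.2.1⟩)]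
  · rw [if_neg (by simp [Finset.mem_range]; omega), if_neg (fun h2 => ha h2.2.2.2)]

lemma pairPoly_sum_left {ι : Type*} (s : Finset ι) (f : ι → MvPolynomial (Fin 2) K)
    (n : ℕ) (Q : MvPolynomial (Fin 2) K) :
    pairPoly K n (∑ a ∈ s, f a) Q = ∑ a ∈ s, pairPoly K n (f a) Q := by
  unfold pairPoly
  rw [Finset.sum_comm]
  refine Finset.sum_congr rfl fun i _ => ?_
  rw [coeff_sum, Finset.mul_sum, Finset.sum_mul]

lemma pairPoly_sum_right {ι : Type*} (s : Finset ι) (f : ι → MvPolynomial (Fin 2) K)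
    (n : ℕ) (P : MvPolynomial (Fin 2) K) :
    pairPoly K n P (∑ a ∈ s, f a) = ∑ a ∈ s, pairPoly K n P (f a) := by
  unfold pairPoly
  rw [Finset.sum_comm]
  refine Finset.sum_congr rfl fun i _ => ?_
  rw [coeff_sum, Finset.mul_sum]

lemma coeff_mon' (m : Fin 2 →₀ ℕ) (c d : ℕ) (x : K) :
    coeff m (mon c d x) = if c = m 0 ∧ d = m 1 then x else 0 := by
  conv_lhs => rw [finsupp_fin2_eq m]
  rw [coeff_mon]

lemma degree_fin2 (m : Fin 2 →₀ ℕ) : m.degree = m 0 + m 1 := by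
  rw [Finsupp.degree_apply, Finset.sum_subset (Finset.subset_univ _)
    (fun x _ hx => Finsupp.notMem_support_iff.mp hx), Fin.sum_univ_two]

lemma homog_decomp {n : ℕ} {P : MvPolynomial (Fin 2) K} (hP : P.IsHomogeneous n) :
    P = ∑ a ∈ Finset.range (n + 1),
      mon a (n - a) (coeff (Finsupp.single (0 : Fin 2) a + Finsupp.single 1 (n - a)) P) := by
  ext m
  rw [coeff_sum]
  by_cases hm : m 0 + m 1 = n
  · rw [Finset.sum_eq_single (m 0)]
    · rw [coeff_mon', if_pos ⟨rfl, by omega⟩]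
      have hn : n - m 0 = m 1 := by omega
      rw [hn, ← finsupp_fin2_eq]
    · intro i _ him
      rw [coeff_mon', if_neg (fun h => him h.1)]
    · intro h
      exact absurd (Finset.mem_range.mpr (by omega)) h
  · have h0 : coeff m P = 0 := hP.coeff_eq_zero (by rw [degree_fin2]; exact hm)
    rw [h0]
    symm
    apply Finset.sum_eq_zero
    intro i hi
    rw [coeff_mon', if_neg]
    rintro ⟨h1, h2⟩
    simp only [Finset.mem_range] at hi
    omega

/-- the substitution associated to a matrix -/
noncomputable def subst (g : Matrix (Fin 2) (Fin 2) K) (j : Fin 2) : MvPolynomial (Fin 2) K :=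
  ∑ i : Fin 2, C (g i j) * X i

lemma mon_eq (a b : ℕ) (x : K) : mon a b x = C x * X 0 ^ a * X 1 ^ b := by
  rw [mon, X_pow_eq_monomial, X_pow_eq_monomial, mul_assoc, monomial_mul, one_mul,
    C_mul_monomial, mul_one]

lemma aeval_mon (g : Matrix (Fin 2) (Fin 2) K) (a b : ℕ) (x : K) :
    aeval (subst g) (mon a b x) = C x * (subst g 0) ^ a * (subst g 1) ^ b := by
  rw [mon_eq, map_mul, map_mul, map_pow, map_pow, aeval_X, aeval_X, aeval_C, algebraMap_eq]

lemma aeval_subst_comp (g h : Matrix (Fin 2) (Fin 2) K) (P : MvPolynomial (Fin 2) K) :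
    aeval (subst (g * h)) P = aeval (subst g) (aeval (subst h) P) := by
  rw [comp_aeval_apply]
  have hs : (fun j => aeval (subst g) (subst h j)) = subst (g * h) := by
    funext j
    simp only [subst, map_sum, map_mul, aeval_X, aeval_C, algebraMap_eq, Matrix.mul_apply,
      Fin.sum_univ_two, map_add]
    ring
  rw [hs]

lemma homog_aeval_subst (g : Matrix (Fin 2) (Fin 2) K) {n : ℕ} {P : MvPolynomial (Fin 2) K}
    (hP : P.IsHomogeneous n) : (aeval (subst g) P).IsHomogeneous n := by
  have := MvPolynomial.IsHomogeneous.aeval (n := 1) hP (g := subst g) ?_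
  · simpa using this
  · intro j
    rw [subst, Fin.sum_univ_two]
    have h1 : (C (g 0 j) * X (0:Fin 2) : MvPolynomial (Fin 2) K).IsHomogeneous 1 := by
      simpa using (isHomogeneous_X K (0:Fin 2)).C_mul (g 0 j)
    have h2 : (C (g 1 j) * X (1:Fin 2) : MvPolynomial (Fin 2) K).IsHomogeneous 1 := by
      simpa using (isHomogeneous_X K (1:Fin 2)).C_mul (g 1 j)
    simpa using h1.add h2

noncomputable def matU (t : K) : Matrix (Fin 2) (Fin 2) K := !![1, t; 0, 1]
noncomputable def matD (u v : K) : Matrix (Fin 2) (Fin 2) K := !![u, 0; 0, v]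
noncomputable def matW : Matrix (Fin 2) (Fin 2) K := !![0, 1; 1, 0]

lemma substU0 (t : K) : subst (matU t) 0 = X 0 := by
  simp [subst, matU, Fin.sum_univ_two]

lemma substU1 (t : K) : subst (matU t) 1 = C t * X 0 + X 1 := by
  simp [subst, matU, Fin.sum_univ_two]

lemma substD0 (u v : K) : subst (matD u v) 0 = C u * X 0 := by
  simp [subst, matD, Fin.sum_univ_two]

lemma substD1 (u v : K) : subst (matD u v) 1 = C v * X 1 := by
  simp [subst, matD, Fin.sum_univ_two]

lemma substW0 : subst (matW : Matrix (Fin 2) (Fin 2) K) 0 = X 1 := by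
  simp [subst, matW, Fin.sum_univ_two]

lemma substW1 : subst (matW : Matrix (Fin 2) (Fin 2) K) 1 = X 0 := by
  simp [subst, matW, Fin.sum_univ_two]

lemma aeval_U_mon (t : K) (a b : ℕ) (x : K) :
    aeval (subst (matU t)) (mon a b x) =
      ∑ k ∈ Finset.range (b + 1), mon (a + k) (b - k) (x * t ^ k * (b.choose k : K)) := by
  rw [aeval_mon, substU0, substU1, add_pow, Finset.mul_sum]
  refine Finset.sum_congr rfl fun k hk => ?_
  rw [mon_eq, mul_pow, ← C_pow, C_mul, C_mul, pow_add, C_eq_coe_nat]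
  ring

lemma aeval_D_mon (u v : K) (a b : ℕ) (x : K) :
    aeval (subst (matD u v)) (mon a b x) = mon a b (x * u ^ a * v ^ b) := by
  rw [aeval_mon, substD0, substD1, mon_eq, mul_pow, mul_pow, ← C_pow, ← C_pow, C_mul, C_mul]
  ring

lemma aeval_W_mon (a b : ℕ) (x : K) :
    aeval (subst (matW : Matrix (Fin 2) (Fin 2) K)) (mon a b x) = mon b a x := by
  rw [aeval_mon, substW0, substW1, mon_eq]
  ring

variable [CharZero K]

lemma alt_sum_choose (m : ℕ) (hm : m ≠ 0) :
    ∑ k ∈ Finset.range (m + 1), (-1 : K) ^ k * (m.choose k : K) = 0 := by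
  have h := Int.alternating_sum_range_choose (n := m)
  rw [if_neg hm] at h
  have := congrArg (Int.cast : ℤ → K) h
  push_cast at this
  simpa using this

lemma choose_div_identity (n a c k : ℕ) (hac : a + c ≤ n) (hk : k ≤ n - a - c) :
    ((n - a).choose k : K) * ((n - c).choose (n - a - c - k) : K) / ((n.choose (a + k)) : K)
      = ((n - a - c).choose k : K) * (Nat.factorial (n - a) : K) * (Nat.factorial (n - c) : K) /
          ((Nat.factorial (n - a - c) : K) * (Nat.factorial n : K)) := by
  have hkb : k ≤ n - a := by omega
  have hmkd : n - a - c - k ≤ n - c := by omega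
  have hakn : a + k ≤ n := by omega
  have e1 : (n - c) - (n - a - c - k) = a + k := by omega
  have e2 : n - (a + k) = n - a - k := by omega
  have e3 : (n - a) - k = n - a - k := by omega
  have e4 : (n - a - c) - k = n - a - c - k := by omega
  rw [Nat.cast_choose K hkb, Nat.cast_choose K hmkd, Nat.cast_choose K hakn,
    Nat.cast_choose K hk, e1, e2, e3, e4]
  have f1 : (Nat.factorial k : K) ≠ 0 := Nat.cast_ne_zero.mpr (Nat.factorial_ne_zero _)
  have f2 : (Nat.factorial (n - a - k) : K) ≠ 0 := Nat.cast_ne_zero.mpr (Nat.factorial_ne_zero _)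
  have f3 : (Nat.factorial (n - a - c - k) : K) ≠ 0 := Nat.cast_ne_zero.mpr (Nat.factorial_ne_zero _)
  have f4 : (Nat.factorial (a + k) : K) ≠ 0 := Nat.cast_ne_zero.mpr (Nat.factorial_ne_zero _)
  have f5 : (Nat.factorial n : K) ≠ 0 := Nat.cast_ne_zero.mpr (Nat.factorial_ne_zero _)
  have f6 : (Nat.factorial (n - a - c) : K) ≠ 0 := Nat.cast_ne_zero.mpr (Nat.factorial_ne_zero _)
  field_simp

lemma pair_D_mon (u v : K) (n a c : ℕ) (ha : a ≤ n) (hc : c ≤ n) (x y : K) :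
    pairPoly K n (aeval (subst (matD u v)) (mon a (n - a) x))
        (aeval (subst (matD u v)) (mon c (n - c) y))
      = (u * v) ^ n * pairPoly K n (mon a (n - a) x) (mon c (n - c) y) := by
  rw [aeval_D_mon, aeval_D_mon, pairPoly_mon, pairPoly_mon]
  by_cases h : c = n - a
  · have hca : n - c = a := by omega
    rw [if_pos ⟨rfl, h, hca, ha⟩, if_pos ⟨rfl, h, hca, ha⟩, h,
      show n - (n - a) = a by omega]
    have hu : u ^ a * u ^ (n - a) = u ^ n := by rw [← pow_add]; congr 1; omega
    have hv : v ^ (n - a) * v ^ a = v ^ n := by rw [← pow_add]; congr 1; omega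
    rw [mul_pow, ← hu, ← hv]
    ring
  · rw [if_neg (fun hh => h hh.2.1), if_neg (fun hh => h hh.2.1), mul_zero]

lemma pair_W_mon (n a c : ℕ) (ha : a ≤ n) (hc : c ≤ n) (x y : K) :
    pairPoly K n (aeval (subst (matW : Matrix (Fin 2) (Fin 2) K)) (mon a (n - a) x))
        (aeval (subst (matW : Matrix (Fin 2) (Fin 2) K)) (mon c (n - c) y))
      = (-1 : K) ^ n * pairPoly K n (mon a (n - a) x) (mon c (n - c) y) := by
  rw [aeval_W_mon, aeval_W_mon, pairPoly_mon, pairPoly_mon]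
  by_cases h : c = n - a
  · have hca : n - c = a := by omega
    have hb : n - (n - a) = a := by omega
    rw [if_pos ⟨hb.symm, by omega, by omega, by omega⟩, if_pos ⟨rfl, h, hca, ha⟩]
    have hs : (-1 : K) ^ (n - a) = (-1) ^ n * (-1) ^ a := by
      rw [← pow_add, show n + a = (n - a) + 2 * a by omega, pow_add, pow_mul]
      simp
    rw [Nat.choose_symm ha, hs]
    ring
  · rw [if_neg, if_neg (fun hh => h hh.2.1), mul_zero]
    rintro ⟨h1, h2, h3, h4⟩
    omega

lemma pair_U_mon (t : K) (n a c : ℕ) (ha : a ≤ n) (hc : c ≤ n) (x y : K) :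
    pairPoly K n (aeval (subst (matU t)) (mon a (n - a) x))
        (aeval (subst (matU t)) (mon c (n - c) y))
      = pairPoly K n (mon a (n - a) x) (mon c (n - c) y) := by
  rw [aeval_U_mon, aeval_U_mon, pairPoly_sum_left]
  simp only [pairPoly_sum_right]
  -- rewrite each summand via pairPoly_mon and clean the condition
  have step1 : ∀ k ∈ Finset.range (n - a + 1), ∀ l ∈ Finset.range (n - c + 1),
      pairPoly K n (mon (a + k) (n - a - k) (x * t ^ k * ((n - a).choose k : K)))
        (mon (c + l) (n - c - l) (y * t ^ l * ((n - c).choose l : K)))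
      = if a + k + (c + l) = n then
          ((-1 : K) ^ (a + k) / (n.choose (a + k) : K)) *
            (x * t ^ k * ((n - a).choose k : K)) * (y * t ^ l * ((n - c).choose l : K))
        else 0 := by
    intro k hk l hl
    simp only [Finset.mem_range] at hk hl
    rw [pairPoly_mon]
    refine if_congr ?_ rfl rfl
    constructor
    · rintro ⟨h1, h2, h3, h4⟩; omega
    · intro h; refine ⟨by omega, by omega, by omega, by omega⟩
  rw [Finset.sum_congr rfl (fun k hk => Finset.sum_congr rfl (fun l hl => step1 k hk l hl))]
  rw [pairPoly_mon]
  by_cases hac : a + c ≤ n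
  · set m := n - a - c with hm
    -- inner sum collapses
    have inner : ∀ k ∈ Finset.range (n - a + 1),
        (∑ l ∈ Finset.range (n - c + 1), if a + k + (c + l) = n then
          ((-1 : K) ^ (a + k) / (n.choose (a + k) : K)) *
            (x * t ^ k * ((n - a).choose k : K)) * (y * t ^ l * ((n - c).choose l : K))
          else 0)
        = if k ≤ m then
            ((-1 : K) ^ (a + k) / (n.choose (a + k) : K)) *
              (x * t ^ k * ((n - a).choose k : K)) *
              (y * t ^ (m - k) * ((n - c).choose (m - k) : K))
          else 0 := by
      intro k hk
      simp only [Finset.mem_range] at hk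
      by_cases hkm : k ≤ m
      · rw [Finset.sum_eq_single (m - k)]
        · rw [if_pos (by omega), if_pos hkm]
        · intro l hl hlm
          rw [if_neg (by omega)]
        · intro hmem
          exact absurd (Finset.mem_range.mpr (by omega)) hmem
      · rw [if_neg hkm]
        apply Finset.sum_eq_zero
        intro l hl
        rw [if_neg (by omega)]
    rw [Finset.sum_congr rfl inner, ← Finset.sum_filter]
    have hfilter : (Finset.range (n - a + 1)).filter (fun k => k ≤ m) = Finset.range (m + 1) := by
      ext k
      simp only [Finset.mem_filter, Finset.mem_range]
      omega
    rw [hfilter]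
    by_cases hm0 : m = 0
    · -- single term, conditions hold
      have hcna : c = n - a := by omega
      have hnca : n - c = a := by omega
      rw [if_pos ⟨rfl, hcna, hnca, ha⟩, hm0]
      simp
    · -- sum vanishes
      rw [if_neg (by rintro ⟨h1, h2, h3, h4⟩; omega)]
      have key : ∀ k ∈ Finset.range (m + 1),
          ((-1 : K) ^ (a + k) / (n.choose (a + k) : K)) *
            (x * t ^ k * ((n - a).choose k : K)) *
            (y * t ^ (m - k) * ((n - c).choose (m - k) : K))
          = ((-1 : K) ^ a * x * y * t ^ m * (Nat.factorial (n - a) : K) *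
              (Nat.factorial (n - c) : K) /
              ((Nat.factorial m : K) * (Nat.factorial n : K))) *
            ((-1 : K) ^ k * (m.choose k : K)) := by
        intro k hk
        simp only [Finset.mem_range] at hk
        have hkm : k ≤ m := by omega
        have htt : t ^ k * t ^ (m - k) = t ^ m := by rw [← pow_add]; congr 1; omega
        have hsign : (-1 : K) ^ (a + k) = (-1) ^ a * (-1) ^ k := by rw [pow_add]
        have hid := choose_div_identity (K := K) n a c k hac (by omega)
        rw [← hm] at hid
        have hch : ((n.choose (a + k)) : K) ≠ 0 := by
          have : a + k ≤ n := by omega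
          exact Nat.cast_ne_zero.mpr (Nat.choose_pos this).ne'
        field_simp at hid ⊢
        rw [hsign, ← htt]
        linear_combination ((-1 : K) ^ a * (-1) ^ k * x * y * t ^ k * t ^ (m - k)) * hid
      rw [Finset.sum_congr rfl key, ← Finset.mul_sum, alt_sum_choose m hm0, mul_zero]
  · -- a + c > n : both sides zero
    rw [if_neg (by rintro ⟨h1, h2, h3, h4⟩; omega)]
    apply Finset.sum_eq_zero
    intro k hk
    apply Finset.sum_eq_zero
    intro l hl
    simp only [Finset.mem_range] at hk hl
    rw [if_neg (by omega)]

/-- equivariance property -/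
def PairEquiv (n : ℕ) (g : Matrix (Fin 2) (Fin 2) K) (e : K) : Prop :=
  ∀ P Q : MvPolynomial (Fin 2) K, P.IsHomogeneous n → Q.IsHomogeneous n →
    pairPoly K n (aeval (subst g) P) (aeval (subst g) Q) = e * pairPoly K n P Q

lemma PairEquiv.mul {n : ℕ} {g h : Matrix (Fin 2) (Fin 2) K} {e f : K}
    (hg : PairEquiv n g e) (hh : PairEquiv n h f) : PairEquiv n (g * h) (e * f) := by
  intro P Q hP hQ
  rw [aeval_subst_comp, aeval_subst_comp,
    hg _ _ (homog_aeval_subst h hP) (homog_aeval_subst h hQ), hh P Q hP hQ, mul_assoc]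

lemma pairEquiv_of_mon {n : ℕ} (g : Matrix (Fin 2) (Fin 2) K) (e : K)
    (hmon : ∀ a c : ℕ, a ≤ n → c ≤ n → ∀ x y : K,
      pairPoly K n (aeval (subst g) (mon a (n - a) x)) (aeval (subst g) (mon c (n - c) y))
        = e * pairPoly K n (mon a (n - a) x) (mon c (n - c) y)) :
    PairEquiv n g e := by
  intro P Q hP hQ
  conv_lhs => rw [homog_decomp hP, homog_decomp hQ]
  conv_rhs => rw [homog_decomp hP, homog_decomp hQ]
  rw [map_sum, map_sum, pairPoly_sum_left, pairPoly_sum_left, Finset.mul_sum]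
  refine Finset.sum_congr rfl fun a haR => ?_
  rw [pairPoly_sum_right, pairPoly_sum_right, Finset.mul_sum]
  refine Finset.sum_congr rfl fun c hcR => ?_
  simp only [Finset.mem_range] at haR hcR
  exact hmon a c (by omega) (by omega) _ _

lemma pairEquiv_U (n : ℕ) (t : K) : PairEquiv n (matU t) 1 :=
  pairEquiv_of_mon _ _ (fun a c ha hc x y => by
    rw [pair_U_mon t n a c ha hc x y, one_mul])

lemma pairEquiv_D (n : ℕ) (u v : K) : PairEquiv n (matD u v) ((u * v) ^ n) :=
  pairEquiv_of_mon _ _ (fun a c ha hc x y => pair_D_mon u v n a c ha hc x y)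

lemma pairEquiv_W (n : ℕ) : PairEquiv n (matW : Matrix (Fin 2) (Fin 2) K) ((-1) ^ n) :=
  pairEquiv_of_mon _ _ (fun a c ha hc x y => pair_W_mon n a c ha hc x y)

lemma pairEquiv_det (n : ℕ) (g : Matrix (Fin 2) (Fin 2) K) (hg : IsUnit g.det) :
    PairEquiv n g (g.det ^ n) := by
  have hdet : g.det ≠ 0 := isUnit_iff_ne_zero.mp hg
  by_cases hA : g 0 0 = 0
  · have hB : g 1 0 ≠ 0 := by
      intro h
      apply hdet
      rw [Matrix.det_fin_two, hA, h]
      ring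
    have hdec : g = matW * (matD (g 1 0) (g 0 1) * matU (g 1 1 / g 1 0)) := by
      ext i j
      fin_cases i <;> fin_cases j <;>
        simp [matW, matU, matD, Matrix.mul_apply, Fin.sum_univ_two, hA] <;>
        field_simp
    have key := (pairEquiv_W (K := K) n).mul
      ((pairEquiv_D n (g 1 0) (g 0 1)).mul (pairEquiv_U n (g 1 1 / g 1 0)))
    rw [← hdec] at key
    have he : (-1 : K) ^ n * ((g 1 0 * g 0 1) ^ n * 1) = g.det ^ n := by
      rw [mul_one, ← neg_pow]
      congr 1
      rw [Matrix.det_fin_two, hA]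
      ring
    rwa [he] at key
  · have hdec : g = (matW * matU (g 1 0 / g 0 0) * matW) *
        (matD (g 0 0) (g.det / g 0 0) * matU (g 0 1 / g 0 0)) := by
      have hd2 : g.det = g 0 0 * g 1 1 - g 0 1 * g 1 0 := Matrix.det_fin_two g
      ext i j
      fin_cases i <;> fin_cases j <;>
        simp [matW, matU, matD, Matrix.mul_apply, Fin.sum_univ_two, hd2] <;>
        field_simp <;> ring
    have key := (((pairEquiv_W (K := K) n).mul (pairEquiv_U n (g 1 0 / g 0 0))).mul
      (pairEquiv_W n)).mul
      ((pairEquiv_D n (g 0 0) (g.det / g 0 0)).mul (pairEquiv_U n (g 0 1 / g 0 0)))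
    rw [← hdec] at key
    have he : ((-1 : K) ^ n * 1 * (-1) ^ n) * ((g 0 0 * (g.det / g 0 0)) ^ n * 1) =
        g.det ^ n := by
      rw [mul_one, mul_one, ← mul_pow, neg_mul_neg, one_mul, one_pow, one_mul,
        mul_div_cancel₀ _ hA]
    rwa [he] at key

end Aux

/-- For `g ∈ GL₂(K)` and binary forms `P, Q` of degree `n`,
`[P((X,Y)g), Q((X,Y)g)] = (det g)^n · [P, Q]`. -/
theorem pairPoly_equivariant (K : Type*) [Field K] [CharZero K] (n : ℕ)
    (g : Matrix (Fin 2) (Fin 2) K) (hg : IsUnit g.det)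
    (P Q : MvPolynomial (Fin 2) K)
    (hP : P ∈ homogeneousSubmodule (Fin 2) K n)
    (hQ : Q ∈ homogeneousSubmodule (Fin 2) K n) :
    pairPoly K n
        (aeval (fun j : Fin 2 => ∑ i : Fin 2, C (g i j) * X i) P)
        (aeval (fun j : Fin 2 => ∑ i : Fin 2, C (g i j) * X i) Q)
      = g.det ^ n * pairPoly K n P Q :=
  pairEquiv_det n g hg P Q ((mem_homogeneousSubmodule _ _).mp hP)
    ((mem_homogeneousSubmodule _ _).mp hQ)
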